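/- Let G' be the spanner instance constructed from a Min-Rep instance with parameters k ≥ 3, k_A = ⌊(k−1)/2⌋, k_B = ⌈(k−1)/2⌉ and x = n²/ñ, where n is the number of vertices of the Min-Rep graph and ñ the number of supervertices. Then for every REP-cover C of the Min-Rep instance with |C| ≥ ñ, there exists a k-spanner H of G' with at most (k+1)·x·|C| edges. -/

import Mathlib

set_option linter.unusedSectionVars false



/-- Vertices of the spanner instance: original Min-Rep vertices `(A × SA) ⊕ (B × SB)`,
plus the path vertices `S = A × [k_A] × [x]` and `T = B × [k_B] × [x]`. -/
abbrev SpV (A B SA SB : Type) (kA kB x : ℕ) : Type :=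
  ((A × SA) ⊕ (B × SB)) ⊕ ((A × Fin kA × Fin x) ⊕ (B × Fin kB × Fin x))

/-- The defining relation of the spanner instance `G'` (to be symmetrized):
Min-Rep edges `E`, path edges `E_M`, attachment edges `E_{sA}`, `E_{tB}` and
supergraph copies `E_{G̃}`. -/
def spRel {A B SA SB : Type} (Et : Finset (A × B)) (π : A × B → Finset (SA × SB))
    (kA kB x : ℕ) :
    SpV A B SA SB kA kB x → SpV A B SA SB kA kB x → Prop
  -- E : Min-Rep edges
  | Sum.inl (Sum.inl (i, α)), Sum.inl (Sum.inr (j, β)) =>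
      (i, j) ∈ Et ∧ (α, β) ∈ π (i, j)
  -- E_M on the S side
  | Sum.inr (Sum.inl (i, jj, p)), Sum.inr (Sum.inl (i', jj', p')) =>
      i = i' ∧ p = p' ∧ (jj' : ℕ) = (jj : ℕ) + 1
  -- E_M on the T side
  | Sum.inr (Sum.inr (j, jj, p)), Sum.inr (Sum.inr (j', jj', p')) =>
      j = j' ∧ p = p' ∧ (jj' : ℕ) = (jj : ℕ) + 1
  -- E_{sA} : s^p_{i,1} to (i, α)
  | Sum.inr (Sum.inl (i, jj, _)), Sum.inl (Sum.inl (i', _)) =>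
      i = i' ∧ (jj : ℕ) = 0
  -- E_{tB} : (j, β) to t^p_{j,1}
  | Sum.inl (Sum.inr (j, _)), Sum.inr (Sum.inr (j', jj, _)) =>
      j = j' ∧ (jj : ℕ) = 0
  -- E_{G̃} : s^p_{i,k_A} to t^p_{j,k_B} for superedges (i,j)
  | Sum.inr (Sum.inl (i, jj, p)), Sum.inr (Sum.inr (j, jj', p')) =>
      (i, j) ∈ Et ∧ p = p' ∧ (jj : ℕ) = kA - 1 ∧ (jj' : ℕ) = kB - 1
  | _, _ => False

/-- The spanner instance `G'`. -/
def spGraph {A B SA SB : Type} (Et : Finset (A × B)) (π : A × B → Finset (SA × SB))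
    (kA kB x : ℕ) : SimpleGraph (SpV A B SA SB kA kB x) :=
  SimpleGraph.fromRel (spRel Et π kA kB x)

/-- `H` contains a canonical path for the `E_{G̃}` edge indexed by `(i, j, p)`:
`s^p_{i,k_A}, …, s^p_{i,1}, (i,α), (j,β), t^p_{j,1}, …, t^p_{j,k_B}`
for some `(α, β) ∈ π (i,j)`. -/
def HasCanonicalPath {A B SA SB : Type} (π : A × B → Finset (SA × SB))
    {kA kB x : ℕ} (hkA : 0 < kA) (hkB : 0 < kB)
    (H : SimpleGraph (SpV A B SA SB kA kB x)) (i : A) (j : B) (p : Fin x) : Prop :=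
  ∃ (α : SA) (β : SB), (α, β) ∈ π (i, j) ∧
    (∀ (m : ℕ) (hm : m + 1 < kA),
      H.Adj (Sum.inr (Sum.inl (i, ⟨m, Nat.lt_of_succ_lt hm⟩, p)))
            (Sum.inr (Sum.inl (i, ⟨m + 1, hm⟩, p)))) ∧
    H.Adj (Sum.inr (Sum.inl (i, ⟨0, hkA⟩, p))) (Sum.inl (Sum.inl (i, α))) ∧
    H.Adj (Sum.inl (Sum.inl (i, α))) (Sum.inl (Sum.inr (j, β))) ∧
    H.Adj (Sum.inl (Sum.inr (j, β))) (Sum.inr (Sum.inr (j, ⟨0, hkB⟩, p))) ∧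
    (∀ (m : ℕ) (hm : m + 1 < kB),
      H.Adj (Sum.inr (Sum.inr (j, ⟨m, Nat.lt_of_succ_lt hm⟩, p)))
            (Sum.inr (Sum.inr (j, ⟨m + 1, hm⟩, p))))

/-- `H` is a `k`-spanner of `G`: a subgraph in which the endpoints of every edge of `G`
are joined by a path of length at most `k`. -/
def IsKSpanner {V : Type} (H G : SimpleGraph V) (k : ℕ) : Prop :=
  H ≤ G ∧ ∀ u v : V, G.Adj u v → ∃ q : H.Walk u v, q.length ≤ k

/-- A REP-cover of a Min-Rep instance with superedges `Et` and relations `π`. -/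
def RepCover {A B SA SB : Type}
    (Et : Finset (A × B)) (π : A × B → Finset (SA × SB))
    (C : Finset ((A × SA) ⊕ (B × SB))) : Prop :=
  ∀ f ∈ Et, ∃ (α : SA) (β : SB),
    Sum.inl (f.1, α) ∈ C ∧ Sum.inr (f.2, β) ∈ C ∧ (α, β) ∈ π f

/-- The supergraph, as a simple graph on `A ⊕ B`. -/
def superGraph {A B : Type} (Et : Finset (A × B)) : SimpleGraph (A ⊕ B) :=
  SimpleGraph.fromRel fun u v => ∃ i j, u = Sum.inl i ∧ v = Sum.inr j ∧ (i, j) ∈ Et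

set_option synthInstance.maxSize 1024 in
instance instDecEqSpVSym2 {A B SA SB : Type} [DecidableEq A] [DecidableEq B] [DecidableEq SA]
    [DecidableEq SB] (kA kB x : ℕ) : DecidableEq (Sym2 (SpV A B SA SB kA kB x)) :=
  inferInstance

namespace SpAux

variable {A B SA SB : Type} [Fintype A] [Fintype B] [Fintype SA] [Fintype SB]
    [DecidableEq A] [DecidableEq B] [DecidableEq SA] [DecidableEq SB]

/-- path edges on the S side -/
def FpA (kA kB x : ℕ) : Finset (Sym2 (SpV A B SA SB kA kB x)) :=
  Finset.image
    (fun q : A × Fin (kA - 1) × Fin x =>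
      s(Sum.inr (Sum.inl (q.1, ⟨q.2.1.1, by have := q.2.1.2; omega⟩, q.2.2)),
        Sum.inr (Sum.inl (q.1, ⟨q.2.1.1 + 1, by have := q.2.1.2; omega⟩, q.2.2))))
    Finset.univ

/-- path edges on the T side -/
def FpB (kA kB x : ℕ) : Finset (Sym2 (SpV A B SA SB kA kB x)) :=
  Finset.image
    (fun q : B × Fin (kB - 1) × Fin x =>
      s(Sum.inr (Sum.inr (q.1, ⟨q.2.1.1, by have := q.2.1.2; omega⟩, q.2.2)),
        Sum.inr (Sum.inr (q.1, ⟨q.2.1.1 + 1, by have := q.2.1.2; omega⟩, q.2.2))))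
    Finset.univ

/-- default stars on the A side (to a fixed optional letter) -/
def FsA (kA kB x : ℕ) (hkA : 0 < kA) (c : Option SA) :
    Finset (Sym2 (SpV A B SA SB kA kB x)) :=
  Finset.image
    (fun q : SA × A × Fin x =>
      s(Sum.inr (Sum.inl (q.2.1, (⟨0, hkA⟩ : Fin kA), q.2.2)),
        Sum.inl (Sum.inl (q.2.1, q.1))))
    (c.toFinset ×ˢ Finset.univ)

/-- default stars on the B side -/
def FsB (kA kB x : ℕ) (hkB : 0 < kB) (d : Option SB) :
    Finset (Sym2 (SpV A B SA SB kA kB x)) :=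
  Finset.image
    (fun q : SB × B × Fin x =>
      s(Sum.inl (Sum.inr (q.2.1, q.1)),
        Sum.inr (Sum.inr (q.2.1, (⟨0, hkB⟩ : Fin kB), q.2.2))))
    (d.toFinset ×ˢ Finset.univ)

/-- stars to all cover vertices, for every copy p -/
def Fcov (kA kB x : ℕ) (hkA : 0 < kA) (hkB : 0 < kB)
    (C : Finset ((A × SA) ⊕ (B × SB))) : Finset (Sym2 (SpV A B SA SB kA kB x)) :=
  Finset.image
    (fun q : ((A × SA) ⊕ (B × SB)) × Fin x =>
      match q.1 with
      | Sum.inl (i, α) =>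
          s(Sum.inr (Sum.inl (i, (⟨0, hkA⟩ : Fin kA), q.2)), Sum.inl (Sum.inl (i, α)))
      | Sum.inr (j, β) =>
          s(Sum.inl (Sum.inr (j, β)), Sum.inr (Sum.inr (j, (⟨0, hkB⟩ : Fin kB), q.2))))
    (C ×ˢ Finset.univ)

/-- stars to all Min-Rep vertices, at copy 0 -/
def Fz (kA kB x : ℕ) (hkA : 0 < kA) (hkB : 0 < kB) (hx : 0 < x) :
    Finset (Sym2 (SpV A B SA SB kA kB x)) :=
  Finset.image
    (fun v : (A × SA) ⊕ (B × SB) =>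
      match v with
      | Sum.inl (i, α) =>
          s(Sum.inr (Sum.inl (i, (⟨0, hkA⟩ : Fin kA), (⟨0, hx⟩ : Fin x))),
            Sum.inl (Sum.inl (i, α)))
      | Sum.inr (j, β) =>
          s(Sum.inl (Sum.inr (j, β)),
            Sum.inr (Sum.inr (j, (⟨0, hkB⟩ : Fin kB), (⟨0, hx⟩ : Fin x)))))
    Finset.univ

/-- all Min-Rep edges -/
def FE (Et : Finset (A × B)) (π : A × B → Finset (SA × SB)) (kA kB x : ℕ) :
    Finset (Sym2 (SpV A B SA SB kA kB x)) :=
  Finset.image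
    (fun q : (A × SA) × (B × SB) => s(Sum.inl (Sum.inl q.1), Sum.inl (Sum.inr q.2)))
    (Finset.univ.filter
      (fun q : (A × SA) × (B × SB) => (q.1.1, q.2.1) ∈ Et ∧ (q.1.2, q.2.2) ∈ π (q.1.1, q.2.1)))

def bigF (Et : Finset (A × B)) (π : A × B → Finset (SA × SB)) (kA kB x : ℕ)
    (hkA : 0 < kA) (hkB : 0 < kB) (hx : 0 < x) (c : Option SA) (d : Option SB)
    (C : Finset ((A × SA) ⊕ (B × SB))) : Finset (Sym2 (SpV A B SA SB kA kB x)) :=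
  FpA kA kB x ∪ FpB kA kB x ∪ FsA kA kB x hkA c ∪ FsB kA kB x hkB d ∪
    Fcov kA kB x hkA hkB C ∪ Fz kA kB x hkA hkB hx ∪ FE Et π kA kB x

lemma bigF_rel (Et : Finset (A × B)) (π : A × B → Finset (SA × SB)) (kA kB x : ℕ)
    (hkA : 0 < kA) (hkB : 0 < kB) (hx : 0 < x) (c : Option SA) (d : Option SB)
    (C : Finset ((A × SA) ⊕ (B × SB))) :
    ∀ e ∈ bigF Et π kA kB x hkA hkB hx c d C,
      ∃ a b, e = s(a, b) ∧ spRel Et π kA kB x a b := by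
  intro e he
  unfold bigF at he
  simp only [Finset.mem_union] at he
  rcases he with ((((((h | h) | h) | h) | h) | h) | h)
  · obtain ⟨⟨i, mm, p⟩, -, rfl⟩ := Finset.mem_image.1 h
    exact ⟨_, _, rfl, rfl, rfl, rfl⟩
  · obtain ⟨⟨j, mm, p⟩, -, rfl⟩ := Finset.mem_image.1 h
    exact ⟨_, _, rfl, rfl, rfl, rfl⟩
  · obtain ⟨⟨a, i, p⟩, -, rfl⟩ := Finset.mem_image.1 h
    exact ⟨_, _, rfl, rfl, rfl⟩
  · obtain ⟨⟨b, j, p⟩, -, rfl⟩ := Finset.mem_image.1 h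
    exact ⟨_, _, rfl, rfl, rfl⟩
  · obtain ⟨⟨w, p⟩, -, heq⟩ := Finset.mem_image.1 h
    rcases w with ⟨i, α⟩ | ⟨j, β⟩
    · subst heq; exact ⟨_, _, rfl, rfl, rfl⟩
    · subst heq; exact ⟨_, _, rfl, rfl, rfl⟩
  · obtain ⟨w, -, heq⟩ := Finset.mem_image.1 h
    rcases w with ⟨i, α⟩ | ⟨j, β⟩
    · subst heq; exact ⟨_, _, rfl, rfl, rfl⟩
    · subst heq; exact ⟨_, _, rfl, rfl, rfl⟩
  · obtain ⟨⟨⟨i, α⟩, ⟨j, β⟩⟩, hq, rfl⟩ := Finset.mem_image.1 h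
    obtain ⟨-, h1, h2⟩ := Finset.mem_filter.1 hq
    · exact ⟨_, _, rfl, h1, h2⟩


section Adj

variable (Et : Finset (A × B)) (π : A × B → Finset (SA × SB)) (kA kB x : ℕ)
    (hkA : 0 < kA) (hkB : 0 < kB) (hx : 0 < x) (c : Option SA) (d : Option SB)
    (C : Finset ((A × SA) ⊕ (B × SB)))

/-- the candidate spanner -/
noncomputable def HS : SimpleGraph (SpV A B SA SB kA kB x) :=
  SimpleGraph.fromEdgeSet (↑(bigF Et π kA kB x hkA hkB hx c d C))

lemma adj_pathA (i : A) (p : Fin x) (m : ℕ) (hm : m + 1 < kA) :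
    (HS Et π kA kB x hkA hkB hx c d C).Adj
      (Sum.inr (Sum.inl (i, ⟨m, Nat.lt_of_succ_lt hm⟩, p)))
      (Sum.inr (Sum.inl (i, ⟨m + 1, hm⟩, p))) := by
  rw [HS, SimpleGraph.fromEdgeSet_adj]
  constructor
  · refine Finset.mem_coe.2 ?_
    unfold bigF
    refine Finset.mem_union_left _ (Finset.mem_union_left _ (Finset.mem_union_left _
      (Finset.mem_union_left _ (Finset.mem_union_left _ (Finset.mem_union_left _ ?_)))))
    exact Finset.mem_image.2 ⟨(i, ⟨m, by omega⟩, p), Finset.mem_univ _, rfl⟩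
  · intro hcon
    simp only [Sum.inr.injEq, Sum.inl.injEq, Prod.mk.injEq, Fin.mk.injEq] at hcon
    omega

lemma adj_pathB (j : B) (p : Fin x) (m : ℕ) (hm : m + 1 < kB) :
    (HS Et π kA kB x hkA hkB hx c d C).Adj
      (Sum.inr (Sum.inr (j, ⟨m, Nat.lt_of_succ_lt hm⟩, p)))
      (Sum.inr (Sum.inr (j, ⟨m + 1, hm⟩, p))) := by
  rw [HS, SimpleGraph.fromEdgeSet_adj]
  constructor
  · refine Finset.mem_coe.2 ?_
    unfold bigF
    refine Finset.mem_union_left _ (Finset.mem_union_left _ (Finset.mem_union_left _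
      (Finset.mem_union_left _ (Finset.mem_union_left _ (Finset.mem_union_right _ ?_)))))
    exact Finset.mem_image.2 ⟨(j, ⟨m, by omega⟩, p), Finset.mem_univ _, rfl⟩
  · intro hcon
    simp only [Sum.inr.injEq, Sum.inl.injEq, Prod.mk.injEq, Fin.mk.injEq] at hcon
    omega

lemma adj_starA (a : SA) (ha : a ∈ c.toFinset) (i : A) (p : Fin x) :
    (HS Et π kA kB x hkA hkB hx c d C).Adj
      (Sum.inr (Sum.inl (i, ⟨0, hkA⟩, p))) (Sum.inl (Sum.inl (i, a))) := by
  rw [HS, SimpleGraph.fromEdgeSet_adj]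
  constructor
  · refine Finset.mem_coe.2 ?_
    unfold bigF
    refine Finset.mem_union_left _ (Finset.mem_union_left _ (Finset.mem_union_left _
      (Finset.mem_union_left _ (Finset.mem_union_right _ ?_))))
    exact Finset.mem_image.2 ⟨(a, i, p), Finset.mem_product.2 ⟨ha, Finset.mem_univ _⟩, rfl⟩
  · simp

lemma adj_starB (b : SB) (hb : b ∈ d.toFinset) (j : B) (p : Fin x) :
    (HS Et π kA kB x hkA hkB hx c d C).Adj
      (Sum.inl (Sum.inr (j, b))) (Sum.inr (Sum.inr (j, ⟨0, hkB⟩, p))) := by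
  rw [HS, SimpleGraph.fromEdgeSet_adj]
  constructor
  · refine Finset.mem_coe.2 ?_
    unfold bigF
    refine Finset.mem_union_left _ (Finset.mem_union_left _ (Finset.mem_union_left _
      (Finset.mem_union_right _ ?_)))
    exact Finset.mem_image.2 ⟨(b, j, p), Finset.mem_product.2 ⟨hb, Finset.mem_univ _⟩, rfl⟩
  · simp

lemma adj_covA (i : A) (α : SA) (hmem : Sum.inl (i, α) ∈ C) (p : Fin x) :
    (HS Et π kA kB x hkA hkB hx c d C).Adj
      (Sum.inr (Sum.inl (i, ⟨0, hkA⟩, p))) (Sum.inl (Sum.inl (i, α))) := by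
  rw [HS, SimpleGraph.fromEdgeSet_adj]
  constructor
  · refine Finset.mem_coe.2 ?_
    unfold bigF
    refine Finset.mem_union_left _ (Finset.mem_union_left _ (Finset.mem_union_right _ ?_))
    exact Finset.mem_image.2 ⟨(Sum.inl (i, α), p),
      Finset.mem_product.2 ⟨hmem, Finset.mem_univ _⟩, rfl⟩
  · simp

lemma adj_covB (j : B) (β : SB) (hmem : Sum.inr (j, β) ∈ C) (p : Fin x) :
    (HS Et π kA kB x hkA hkB hx c d C).Adj
      (Sum.inl (Sum.inr (j, β))) (Sum.inr (Sum.inr (j, ⟨0, hkB⟩, p))) := by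
  rw [HS, SimpleGraph.fromEdgeSet_adj]
  constructor
  · refine Finset.mem_coe.2 ?_
    unfold bigF
    refine Finset.mem_union_left _ (Finset.mem_union_left _ (Finset.mem_union_right _ ?_))
    exact Finset.mem_image.2 ⟨(Sum.inr (j, β), p),
      Finset.mem_product.2 ⟨hmem, Finset.mem_univ _⟩, rfl⟩
  · simp

lemma adj_zA (i : A) (α : SA) :
    (HS Et π kA kB x hkA hkB hx c d C).Adj
      (Sum.inr (Sum.inl (i, ⟨0, hkA⟩, ⟨0, hx⟩))) (Sum.inl (Sum.inl (i, α))) := by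
  rw [HS, SimpleGraph.fromEdgeSet_adj]
  constructor
  · refine Finset.mem_coe.2 ?_
    unfold bigF
    refine Finset.mem_union_left _ (Finset.mem_union_right _ ?_)
    exact Finset.mem_image.2 ⟨Sum.inl (i, α), Finset.mem_univ _, rfl⟩
  · simp

lemma adj_zB (j : B) (β : SB) :
    (HS Et π kA kB x hkA hkB hx c d C).Adj
      (Sum.inl (Sum.inr (j, β))) (Sum.inr (Sum.inr (j, ⟨0, hkB⟩, ⟨0, hx⟩))) := by
  rw [HS, SimpleGraph.fromEdgeSet_adj]
  constructor
  · refine Finset.mem_coe.2 ?_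
    unfold bigF
    refine Finset.mem_union_left _ (Finset.mem_union_right _ ?_)
    exact Finset.mem_image.2 ⟨Sum.inr (j, β), Finset.mem_univ _, rfl⟩
  · simp

lemma adj_E (i : A) (α : SA) (j : B) (β : SB) (h1 : (i, j) ∈ Et)
    (h2 : (α, β) ∈ π (i, j)) :
    (HS Et π kA kB x hkA hkB hx c d C).Adj
      (Sum.inl (Sum.inl (i, α))) (Sum.inl (Sum.inr (j, β))) := by
  rw [HS, SimpleGraph.fromEdgeSet_adj]
  constructor
  · refine Finset.mem_coe.2 ?_
    unfold bigF
    refine Finset.mem_union_right _ ?_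
    exact Finset.mem_image.2 ⟨((i, α), (j, β)),
      Finset.mem_filter.2 ⟨Finset.mem_univ _, h1, h2⟩, rfl⟩
  · simp

lemma walkS (i : A) (p : Fin x) :
    ∀ (m : ℕ) (hm : m < kA),
      ∃ w : (HS Et π kA kB x hkA hkB hx c d C).Walk
          (Sum.inr (Sum.inl (i, ⟨m, hm⟩, p))) (Sum.inr (Sum.inl (i, ⟨0, hkA⟩, p))),
        w.length = m := by
  intro m
  induction m with
  | zero => intro hm; exact ⟨SimpleGraph.Walk.nil, rfl⟩
  | succ m ih =>
    intro hm
    obtain ⟨w, hw⟩ := ih (by omega)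
    exact ⟨SimpleGraph.Walk.cons
      (adj_pathA Et π kA kB x hkA hkB hx c d C i p m hm).symm w,
      by rw [SimpleGraph.Walk.length_cons, hw]⟩

lemma walkT (j : B) (p : Fin x) :
    ∀ (m : ℕ) (hm : m < kB),
      ∃ w : (HS Et π kA kB x hkA hkB hx c d C).Walk
          (Sum.inr (Sum.inr (j, ⟨m, hm⟩, p))) (Sum.inr (Sum.inr (j, ⟨0, hkB⟩, p))),
        w.length = m := by
  intro m
  induction m with
  | zero => intro hm; exact ⟨SimpleGraph.Walk.nil, rfl⟩
  | succ m ih =>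
    intro hm
    obtain ⟨w, hw⟩ := ih (by omega)
    exact ⟨SimpleGraph.Walk.cons
      (adj_pathB Et π kA kB x hkA hkB hx c d C j p m hm).symm w,
      by rw [SimpleGraph.Walk.length_cons, hw]⟩

end Adj

section Card

variable (Et : Finset (A × B)) (π : A × B → Finset (SA × SB)) (kA kB x : ℕ)
    (hkA : 0 < kA) (hkB : 0 < kB) (hx : 0 < x) (c : Option SA) (d : Option SB)
    (C : Finset ((A × SA) ⊕ (B × SB)))

lemma card_FpA : (FpA (A := A) (B := B) (SA := SA) (SB := SB) kA kB x).card ≤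
    Fintype.card A * ((kA - 1) * x) := by
  refine le_trans Finset.card_image_le ?_
  simp [Finset.card_univ]

lemma card_FpB : (FpB (A := A) (B := B) (SA := SA) (SB := SB) kA kB x).card ≤
    Fintype.card B * ((kB - 1) * x) := by
  refine le_trans Finset.card_image_le ?_
  simp [Finset.card_univ]

lemma card_FsA : (FsA (A := A) (B := B) (SA := SA) (SB := SB) kA kB x hkA c).card ≤
    Fintype.card A * x := by
  refine le_trans Finset.card_image_le ?_
  rcases c with _ | a <;> simp [Finset.card_product, Finset.card_univ]

lemma card_FsB : (FsB (A := A) (B := B) (SA := SA) (SB := SB) kA kB x hkB d).card ≤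
    Fintype.card B * x := by
  refine le_trans Finset.card_image_le ?_
  rcases d with _ | b <;> simp [Finset.card_product, Finset.card_univ]

lemma card_Fcov : (Fcov (A := A) (B := B) (SA := SA) (SB := SB) kA kB x hkA hkB C).card ≤
    C.card * x := by
  refine le_trans Finset.card_image_le ?_
  simp [Finset.card_product, Finset.card_univ]

lemma card_Fz : (Fz (A := A) (B := B) (SA := SA) (SB := SB) kA kB x hkA hkB hx).card ≤
    Fintype.card A * Fintype.card SA + Fintype.card B * Fintype.card SB := by
  refine le_trans Finset.card_image_le ?_
  simp [Finset.card_univ]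

lemma card_FE : (FE (A := A) (B := B) (SA := SA) (SB := SB) Et π kA kB x).card ≤
    (Fintype.card A * Fintype.card SA) * (Fintype.card B * Fintype.card SB) := by
  refine le_trans Finset.card_image_le ?_
  refine le_trans (Finset.card_filter_le _ _) ?_
  simp [Finset.card_univ]

lemma card_bigF : (bigF Et π kA kB x hkA hkB hx c d C).card ≤
    Fintype.card A * ((kA - 1) * x) + Fintype.card B * ((kB - 1) * x) +
      Fintype.card A * x + Fintype.card B * x + C.card * x +
      (Fintype.card A * Fintype.card SA + Fintype.card B * Fintype.card SB) +
      (Fintype.card A * Fintype.card SA) * (Fintype.card B * Fintype.card SB) := by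
  unfold bigF
  refine le_trans (Finset.card_union_le _ _) ?_
  refine Nat.add_le_add ?_ (card_FE Et π kA kB x)
  refine le_trans (Finset.card_union_le _ _) ?_
  refine Nat.add_le_add ?_ (card_Fz kA kB x hkA hkB hx)
  refine le_trans (Finset.card_union_le _ _) ?_
  refine Nat.add_le_add ?_ (card_Fcov kA kB x hkA hkB C)
  refine le_trans (Finset.card_union_le _ _) ?_
  refine Nat.add_le_add ?_ (card_FsB kA kB x hkB d)
  refine le_trans (Finset.card_union_le _ _) ?_
  refine Nat.add_le_add ?_ (card_FsA kA kB x hkA c)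
  refine le_trans (Finset.card_union_le _ _) ?_
  exact Nat.add_le_add (card_FpA kA kB x) (card_FpB kA kB x)

end Card

end SpAux


/-- with `x = n²/ñ`, every REP-cover `C` of the Min-Rep instance with
`|C| ≥ ñ` yields a `k`-spanner of the spanner instance `G'` with at most
`(k+1)·x·|C|` edges. -/
theorem spanner_from_repCover {A B SA SB : Type}
    [Fintype A] [Fintype B] [Fintype SA] [Fintype SB]
    [DecidableEq A] [DecidableEq B] [DecidableEq SA] [DecidableEq SB]
    (Et : Finset (A × B)) (π : A × B → Finset (SA × SB))
    (k kA kB x n nt : ℕ) (hk : 3 ≤ k)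
    (hkA : kA = (k - 1) / 2) (hkB : kB = (k - 1) - (k - 1) / 2)
    (hnt : Fintype.card A + Fintype.card B = nt)
    (hA : 2 * Fintype.card A = nt) (hB : 2 * Fintype.card B = nt)
    (hn : Fintype.card A * Fintype.card SA + Fintype.card B * Fintype.card SB = n)
    (hxval : x = n ^ 2 / nt) (hx : 1 ≤ x)
    (hπ : ∀ f ∈ Et, (π f).Nonempty)
    (C : Finset ((A × SA) ⊕ (B × SB)))
    (hC : RepCover Et π C) (hCcard : nt ≤ C.card) :
    ∃ H : SimpleGraph (SpV A B SA SB kA kB x),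
      IsKSpanner H (spGraph Et π kA kB x) k ∧
      H.edgeSet.ncard ≤ (k + 1) * x * C.card := by
  classical
  have hkA0 : 0 < kA := by omega
  have hkB0 : 0 < kB := by omega
  have hx0 : 0 < x := hx
  have hkk : kA + kB = k - 1 := by omega
  set c : Option SA := if h : Nonempty SA then some h.some else none with hc
  set d : Option SB := if h : Nonempty SB then some h.some else none with hd
  refine ⟨SpAux.HS Et π kA kB x hkA0 hkB0 hx0 c d C, ⟨?_, ?_⟩, ?_⟩
  · -- H ≤ G
    intro u v huv
    rw [SpAux.HS, SimpleGraph.fromEdgeSet_adj] at huv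
    obtain ⟨hmem, hne⟩ := huv
    rw [spGraph, SimpleGraph.fromRel_adj]
    refine ⟨hne, ?_⟩
    obtain ⟨a, b, heq, hrel⟩ :=
      SpAux.bigF_rel Et π kA kB x hkA0 hkB0 hx0 c d C _ (Finset.mem_coe.1 hmem)
    rw [Sym2.eq_iff] at heq
    rcases heq with ⟨rfl, rfl⟩ | ⟨rfl, rfl⟩
    · exact Or.inl hrel
    · exact Or.inr hrel
  · -- spanning
    have HpA := SpAux.adj_pathA Et π kA kB x hkA0 hkB0 hx0 c d C
    have HpB := SpAux.adj_pathB Et π kA kB x hkA0 hkB0 hx0 c d C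
    have HsA := SpAux.adj_starA Et π kA kB x hkA0 hkB0 hx0 c d C
    have HsB := SpAux.adj_starB Et π kA kB x hkA0 hkB0 hx0 c d C
    have HcA := SpAux.adj_covA Et π kA kB x hkA0 hkB0 hx0 c d C
    have HcB := SpAux.adj_covB Et π kA kB x hkA0 hkB0 hx0 c d C
    have HzA := SpAux.adj_zA Et π kA kB x hkA0 hkB0 hx0 c d C
    have HzB := SpAux.adj_zB Et π kA kB x hkA0 hkB0 hx0 c d C
    have HE := SpAux.adj_E Et π kA kB x hkA0 hkB0 hx0 c d C
    have HwS := SpAux.walkS Et π kA kB x hkA0 hkB0 hx0 c d C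
    have HwT := SpAux.walkT Et π kA kB x hkA0 hkB0 hx0 c d C
    -- length-3 detour walks
    have walk3A : ∀ (i : A) (α : SA) (p : Fin x),
        ∃ w : (SpAux.HS Et π kA kB x hkA0 hkB0 hx0 c d C).Walk
          (Sum.inr (Sum.inl (i, ⟨0, hkA0⟩, p))) (Sum.inl (Sum.inl (i, α))),
          w.length = 3 := by
      intro i α p
      have hne : Nonempty SA := ⟨α⟩
      have ha : hne.some ∈ c.toFinset := by rw [hc, dif_pos hne]; simp
      exact ⟨SimpleGraph.Walk.cons (HsA hne.some ha i p)
        (SimpleGraph.Walk.cons (HzA i hne.some).symm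
          (SimpleGraph.Walk.cons (HzA i α) SimpleGraph.Walk.nil)), rfl⟩
    have walk3B : ∀ (j : B) (β : SB) (p : Fin x),
        ∃ w : (SpAux.HS Et π kA kB x hkA0 hkB0 hx0 c d C).Walk
          (Sum.inl (Sum.inr (j, β))) (Sum.inr (Sum.inr (j, ⟨0, hkB0⟩, p))),
          w.length = 3 := by
      intro j β p
      have hne : Nonempty SB := ⟨β⟩
      have hb : hne.some ∈ d.toFinset := by rw [hd, dif_pos hne]; simp
      exact ⟨SimpleGraph.Walk.cons (HzB j β)
        (SimpleGraph.Walk.cons (HsB hne.some hb j ⟨0, hx0⟩).symm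
          (SimpleGraph.Walk.cons (HsB hne.some hb j p) SimpleGraph.Walk.nil)), rfl⟩
    have walkBig : ∀ (i : A) (j : B) (p : Fin x), (i, j) ∈ Et →
        ∀ (h1 : kA - 1 < kA) (h2 : kB - 1 < kB),
        ∃ w : (SpAux.HS Et π kA kB x hkA0 hkB0 hx0 c d C).Walk
          (Sum.inr (Sum.inl (i, ⟨kA - 1, h1⟩, p))) (Sum.inr (Sum.inr (j, ⟨kB - 1, h2⟩, p))),
          w.length ≤ k := by
      intro i j p hij h1 h2
      obtain ⟨α, β, hαC, hβC, hπab⟩ := hC (i, j) hij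
      obtain ⟨w1, hw1⟩ := HwS i p (kA - 1) h1
      obtain ⟨w2, hw2⟩ := HwT j p (kB - 1) h2
      refine ⟨w1.append (SimpleGraph.Walk.cons (HcA i α hαC p)
        (SimpleGraph.Walk.cons (HE i α j β hij hπab)
          (SimpleGraph.Walk.cons (HcB j β hβC p) w2.reverse))), ?_⟩
      simp only [SimpleGraph.Walk.length_append, SimpleGraph.Walk.length_cons,
        SimpleGraph.Walk.length_reverse, hw1, hw2]
      omega
    intro u v hadj
    rw [spGraph, SimpleGraph.fromRel_adj] at hadj
    obtain ⟨hne, hrel⟩ := hadj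
    rcases u with (⟨i, α⟩ | ⟨j, β⟩) | (⟨i, mm, p⟩ | ⟨j, mm, p⟩) <;>
      rcases v with (⟨i', α'⟩ | ⟨j', β'⟩) | (⟨i', mm', p'⟩ | ⟨j', mm', p'⟩)
    · -- vA vA : impossible
      exact ((hrel.elim (fun hh => (hh : False)) (fun hh => (hh : False))).elim)
    · -- vA vB : E edge
      obtain ⟨h1, h2⟩ := hrel.resolve_right (fun hh => (hh : False))
      exact ⟨SimpleGraph.Walk.cons (HE i α j' β' h1 h2) SimpleGraph.Walk.nil, by
        simp only [SimpleGraph.Walk.length_cons, SimpleGraph.Walk.length_nil]; omega⟩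
    · -- vA vS : reversed E_sA
      obtain ⟨h1, h0⟩ := hrel.resolve_left (fun hh => (hh : False))
      subst h1
      obtain ⟨mv, hmv⟩ := mm'
      obtain rfl : mv = 0 := h0
      obtain ⟨w, hw⟩ := walk3A i' α p'
      exact ⟨w.reverse, by
        simp only [SimpleGraph.Walk.length_reverse, hw]; omega⟩
    · -- vA vT : impossible
      exact ((hrel.elim (fun hh => (hh : False)) (fun hh => (hh : False))).elim)
    · -- vB vA : reversed E edge
      obtain ⟨h1, h2⟩ := hrel.resolve_left (fun hh => (hh : False))
      exact ⟨SimpleGraph.Walk.cons (HE i' α' j β h1 h2).symm SimpleGraph.Walk.nil, by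
        simp only [SimpleGraph.Walk.length_cons, SimpleGraph.Walk.length_nil]; omega⟩
    · -- vB vB : impossible
      exact ((hrel.elim (fun hh => (hh : False)) (fun hh => (hh : False))).elim)
    · -- vB vS : impossible
      exact ((hrel.elim (fun hh => (hh : False)) (fun hh => (hh : False))).elim)
    · -- vB vT : E_tB
      obtain ⟨h1, h0⟩ := hrel.resolve_right (fun hh => (hh : False))
      subst h1
      obtain ⟨mv, hmv⟩ := mm'
      obtain rfl : mv = 0 := h0
      obtain ⟨w, hw⟩ := walk3B j β p'
      exact ⟨w, by rw [hw]; omega⟩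
    · -- vS vA : E_sA
      obtain ⟨h1, h0⟩ := hrel.resolve_right (fun hh => (hh : False))
      subst h1
      obtain ⟨mv, hmv⟩ := mm
      obtain rfl : mv = 0 := h0
      obtain ⟨w, hw⟩ := walk3A i α' p
      exact ⟨w, by rw [hw]; omega⟩
    · -- vS vB : impossible
      exact ((hrel.elim (fun hh => (hh : False)) (fun hh => (hh : False))).elim)
    · -- vS vS : E_M
      obtain ⟨mv, hmv⟩ := mm
      obtain ⟨mv', hmv'⟩ := mm'
      rcases hrel with ⟨h1, h2, h3⟩ | ⟨h1, h2, h3⟩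
      · subst h1; subst h2
        obtain rfl : mv' = mv + 1 := h3
        exact ⟨SimpleGraph.Walk.cons (HpA i p mv hmv') SimpleGraph.Walk.nil, by
          simp only [SimpleGraph.Walk.length_cons, SimpleGraph.Walk.length_nil]; omega⟩
      · subst h1; subst h2
        obtain rfl : mv = mv' + 1 := h3
        exact ⟨SimpleGraph.Walk.cons (HpA i' p' mv' hmv).symm SimpleGraph.Walk.nil, by
          simp only [SimpleGraph.Walk.length_cons, SimpleGraph.Walk.length_nil]; omega⟩
    · -- vS vT : E_Gtilde
      obtain ⟨hij, hp, h1, h2⟩ := hrel.resolve_right (fun hh => (hh : False))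
      subst hp
      obtain ⟨mv, hmv⟩ := mm
      obtain rfl : mv = kA - 1 := h1
      obtain ⟨mv', hmv'⟩ := mm'
      obtain rfl : mv' = kB - 1 := h2
      exact walkBig i j' p hij hmv hmv'
    · -- vT vA : impossible
      exact ((hrel.elim (fun hh => (hh : False)) (fun hh => (hh : False))).elim)
    · -- vT vB : reversed E_tB
      obtain ⟨h1, h0⟩ := hrel.resolve_left (fun hh => (hh : False))
      subst h1
      obtain ⟨mv, hmv⟩ := mm
      obtain rfl : mv = 0 := h0
      obtain ⟨w, hw⟩ := walk3B j' β' p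
      exact ⟨w.reverse, by
        simp only [SimpleGraph.Walk.length_reverse, hw]; omega⟩
    · -- vT vS : reversed E_Gtilde
      obtain ⟨hij, hp, h1, h2⟩ := hrel.resolve_left (fun hh => (hh : False))
      subst hp
      obtain ⟨mv, hmv⟩ := mm'
      obtain rfl : mv = kA - 1 := h1
      obtain ⟨mv', hmv'⟩ := mm
      obtain rfl : mv' = kB - 1 := h2
      obtain ⟨w, hw⟩ := walkBig i' j p' hij hmv hmv'
      exact ⟨w.reverse, by rw [SimpleGraph.Walk.length_reverse]; exact hw⟩
    · -- vT vT : E_M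
      obtain ⟨mv, hmv⟩ := mm
      obtain ⟨mv', hmv'⟩ := mm'
      rcases hrel with ⟨h1, h2, h3⟩ | ⟨h1, h2, h3⟩
      · subst h1; subst h2
        obtain rfl : mv' = mv + 1 := h3
        exact ⟨SimpleGraph.Walk.cons (HpB j p mv hmv') SimpleGraph.Walk.nil, by
          simp only [SimpleGraph.Walk.length_cons, SimpleGraph.Walk.length_nil]; omega⟩
      · subst h1; subst h2
        obtain rfl : mv = mv' + 1 := h3
        exact ⟨SimpleGraph.Walk.cons (HpB j' p' mv' hmv).symm SimpleGraph.Walk.nil, by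
          simp only [SimpleGraph.Walk.length_cons, SimpleGraph.Walk.length_nil]; omega⟩
  · -- counting
    rw [SpAux.HS, SimpleGraph.edgeSet_fromEdgeSet]
    refine le_trans (le_trans (Set.ncard_le_ncard Set.diff_subset (Finset.finite_toSet _))
      (le_of_eq (Set.ncard_coe_finset _))) ?_
    refine le_trans (SpAux.card_bigF Et π kA kB x hkA0 hkB0 hx0 c d C) ?_
    have hnt0 : 0 < nt := by
      rcases Nat.eq_zero_or_pos nt with h0 | h
      · rw [h0, Nat.div_zero] at hxval; omega
      · exact h
    have hdm := Nat.div_add_mod (n ^ 2) nt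
    rw [← hxval] at hdm
    have hmod : n ^ 2 % nt < nt := Nat.mod_lt _ hnt0
    have hntx : nt ≤ nt * x := Nat.le_mul_of_pos_right nt hx0
    have hQ : n ^ 2 ≤ 2 * (nt * x) := by linarith
    have hn2 : n ≤ nt * x := by
      rcases le_or_gt n 1 with h1 | h1
      · have hp1 : n ^ 2 ≤ 1 := by
          calc n ^ 2 ≤ 1 ^ 2 := Nat.pow_le_pow_left h1 2
          _ = 1 := one_pow 2
        have hp2 : nt * x ≤ 1 := by linarith [hdm, hp1, Nat.zero_le (n ^ 2 % nt)]
        have hp3 : nt ≤ 1 := le_trans hntx hp2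
        exfalso; omega
      · have h2n : 2 * n ≤ n * n := Nat.mul_le_mul_right n h1
        have hnn : n * n = n ^ 2 := (pow_two n).symm
        linarith
    have hE4 : 4 * ((Fintype.card A * Fintype.card SA) * (Fintype.card B * Fintype.card SB))
        ≤ n ^ 2 := by
      have hsq : n ^ 2 = (Fintype.card A * Fintype.card SA) ^ 2 +
          2 * ((Fintype.card A * Fintype.card SA) * (Fintype.card B * Fintype.card SB)) +
          (Fintype.card B * Fintype.card SB) ^ 2 := by rw [← hn]; ring
      have htm := two_mul_le_add_sq (Fintype.card A * Fintype.card SA)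
        (Fintype.card B * Fintype.card SB)
      linarith
    obtain ⟨kA', rfl⟩ : ∃ m, kA = m + 1 := ⟨kA - 1, by omega⟩
    obtain ⟨kB', rfl⟩ : ∃ m, kB = m + 1 := ⟨kB - 1, by omega⟩
    have hk' : k = kA' + kB' + 3 := by omega
    subst hk'
    simp only [Nat.add_sub_cancel]
    have e2a : 2 * Fintype.card A ≤ C.card := by omega
    have e2b : 2 * Fintype.card B ≤ C.card := by omega
    have hxc : nt * x ≤ C.card * x := Nat.mul_le_mul_right x hCcard
    have hncc : n ≤ C.card * x := le_trans hn2 hxc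
    have hEcc : 2 * ((Fintype.card A * Fintype.card SA) * (Fintype.card B * Fintype.card SB))
        ≤ C.card * x := by linarith
    linarith [mul_le_mul_left e2a (kA' * x), mul_le_mul_left e2b (kB' * x),
      mul_le_mul_left e2a x, mul_le_mul_left e2b x, hncc, hEcc,
      Nat.zero_le (C.card * x), Nat.zero_le (C.card * (kA' * x)),
      Nat.zero_le (C.card * (kB' * x))]
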